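/- Let h_1,…,h_S : Ω → ℝ, let L > 0, and set W = max(M,N) and c = √( γ · min_{s} ω_s / (L² W) ). If u* = (u*_1,…,u*_S) minimizes the functional (u_1,…,u_S) ↦ Σ_{s=1}^S [ ‖u_s − h_s‖₂² + (γ ω_s / L²) ‖∇_{a_s} u_s‖₀ ] over all S-tuples of functions Ω → ℝ, then every nonzero directional jump of u* has height at least c; that is, for every s ∈ {1,…,S} and every pixel p ∈ Ω with p + a_s ∈ Ω, either u*_s(p+a_s) = u*_s(p) or |u*_s(p+a_s) − u*_s(p)| ≥ c. -/

import Mathlib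

open Finset

/-- The discrete image domain `Ω = {0,…,M−1} × {0,…,N−1} ⊆ ℤ²`. -/
noncomputable def gridDomain (M N : ℕ) : Finset (ℤ × ℤ) :=
  (Finset.Ico (0 : ℤ) (M : ℤ)) ×ˢ (Finset.Ico (0 : ℤ) (N : ℤ))

/-- Pixels of the image domain. -/
abbrev Pix (M N : ℕ) := {p : ℤ × ℤ // p ∈ gridDomain M N}

/-- `‖∇_a u‖₀`: the number of pixels `p ∈ Ω` with `p + a ∈ Ω` and `u (p + a) ≠ u p`. -/
noncomputable def jumpCount (M N : ℕ) (u : Pix M N → ℝ) (a : ℤ × ℤ) : ℕ :=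
  Set.ncard {p : Pix M N |
    ∃ h : (p : ℤ × ℤ) + a ∈ gridDomain M N, u ⟨(p : ℤ × ℤ) + a, h⟩ ≠ u p}

/-- If `c t² + 2 t B ≥ 0` for all `t` with `c > 0`, then `B = 0`. -/
lemma quad_nonneg_forces_zero (c B : ℝ) (hc : 0 < c) (hq : ∀ t : ℝ, 0 ≤ c * t ^ 2 + 2 * t * B) :
    B = 0 := by
  by_contra hB0
  have h1 := hq (-(B / c))
  have hne : c ≠ 0 := ne_of_gt hc
  have h2 : c * (-(B / c)) ^ 2 + 2 * (-(B / c)) * B = -(B ^ 2 / c) := by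
    field_simp
    ring
  rw [h2] at h1
  have h3 : 0 < B ^ 2 / c := div_pos (by positivity) hc
  linarith

/-- any minimizer `u* = (u*_1,…,u*_S)` of
`(u_1,…,u_S) ↦ Σ_s [ ‖u_s − h_s‖₂² + (γω_s/L²)‖∇_{a_s}u_s‖₀ ]` has minimal directional
jump height `c = √(γ · min_s ω_s / (L² W))` with `W = max(M,N)`: every nonzero
directional jump of `u*` has height at least `c`. -/
theorem minimizer_minimal_jump_height (M N S : ℕ) (hM : 1 ≤ M) (hN : 1 ≤ N) (hS : 1 ≤ S)
    (a : Fin S → ℤ × ℤ) (ha : ∀ s, a s ≠ 0)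
    (habs : ∀ s, |(a s).1| ≤ (max M N : ℤ) ∧ |(a s).2| ≤ (max M N : ℤ))
    (hline : ∀ (s : Fin S) (p : ℤ × ℤ),
      Set.ncard {k : ℤ | p + k • a s ∈ gridDomain M N} ≤ max M N)
    (ω : Fin S → ℝ) (hω : ∀ s, 0 < ω s) (γ : ℝ) (hγ : 0 < γ) (L : ℝ) (hL : 0 < L)
    (h : Fin S → Pix M N → ℝ)
    (ustar : Fin S → Pix M N → ℝ)
    (hmin : ∀ u : Fin S → Pix M N → ℝ,
      (∑ s, ((∑ p, (ustar s p - h s p) ^ 2) +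
          (γ * ω s / L ^ 2) * (jumpCount M N (ustar s) (a s) : ℝ))) ≤
        ∑ s, ((∑ p, (u s p - h s p) ^ 2) +
          (γ * ω s / L ^ 2) * (jumpCount M N (u s) (a s) : ℝ))) :
    ∀ (s : Fin S) (p : Pix M N) (hq : (p : ℤ × ℤ) + a s ∈ gridDomain M N),
      ustar s ⟨(p : ℤ × ℤ) + a s, hq⟩ = ustar s p ∨
        Real.sqrt (γ * (Finset.univ.inf'
            (Finset.univ_nonempty_iff.mpr ⟨⟨0, by omega⟩⟩) ω) /
          (L ^ 2 * (max M N : ℝ))) ≤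
        |ustar s ⟨(p : ℤ × ℤ) + a s, hq⟩ - ustar s p| := by
  classical
  intro s p hq
  by_cases hd0 : ustar s ⟨(p : ℤ × ℤ) + a s, hq⟩ = ustar s p
  · exact Or.inl hd0
  right
  set u : Pix M N → ℝ := ustar s with hu
  set pa : Pix M N := ⟨(p : ℤ × ℤ) + a s, hq⟩ with hpa
  set d : ℝ := u pa - u p with hdd
  have hd : d ≠ 0 := sub_ne_zero.mpr hd0
  -- the one-sided line segment through p in direction a s
  set T : Finset (Pix M N) :=
    univ.filter (fun q => ∃ k : ℤ, 1 ≤ k ∧ (q : ℤ × ℤ) = (p : ℤ × ℤ) + k • (a s)) with hT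
  have hmemT : ∀ q : Pix M N,
      q ∈ T ↔ ∃ k : ℤ, 1 ≤ k ∧ (q : ℤ × ℤ) = (p : ℤ × ℤ) + k • (a s) := by
    intro q; simp [hT]
  have hpaT : pa ∈ T := (hmemT pa).mpr ⟨1, le_refl 1, by simp [hpa]⟩
  have hpT : p ∉ T := by
    intro hp
    rcases (hmemT p).mp hp with ⟨k, hk1, hkeq⟩
    have hz : k • (a s) = 0 := (left_eq_add.mp hkeq)
    rcases smul_eq_zero.mp hz with h0 | h0
    · omega
    · exact ha s h0
  -- the indicator of T is "shift invariant" away from p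
  have hTiff : ∀ (q : Pix M N) (hqa : (q : ℤ × ℤ) + a s ∈ gridDomain M N), q ≠ p →
      ((⟨(q : ℤ × ℤ) + a s, hqa⟩ : Pix M N) ∈ T ↔ q ∈ T) := by
    intro q hqa hqp
    constructor
    · intro hmem
      rcases (hmemT _).mp hmem with ⟨k, hk1, hkeq⟩
      have hq' : (q : ℤ × ℤ) = (p : ℤ × ℤ) + (k - 1) • (a s) := by
        have h1 : (q : ℤ × ℤ) = (p : ℤ × ℤ) + k • (a s) - a s := eq_sub_of_add_eq hkeq
        rw [h1, sub_smul, one_smul]; abel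
      have hk2 : 2 ≤ k := by
        by_contra hlt
        have hk1' : k = 1 := by omega
        apply hqp
        apply Subtype.ext
        rw [hq', hk1']; simp
      exact (hmemT q).mpr ⟨k - 1, by omega, hq'⟩
    · intro hmem
      rcases (hmemT q).mp hmem with ⟨k, hk1, hkeq⟩
      refine (hmemT _).mpr ⟨k + 1, by omega, ?_⟩
      show (q : ℤ × ℤ) + a s = (p : ℤ × ℤ) + (k + 1) • (a s)
      rw [hkeq, add_smul, one_smul]; abel
  set B : ℝ := ∑ q ∈ T, (u q - h s q) with hB
  set A : ℝ := γ * ω s / L ^ 2 with hA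
  have hApos : 0 < A := by rw [hA]; exact div_pos (mul_pos hγ (hω s)) (by positivity)
  -- jump sets
  set Ju : Set (Pix M N) := {q : Pix M N |
      ∃ hh : (q : ℤ × ℤ) + a s ∈ gridDomain M N, u ⟨(q : ℤ × ℤ) + a s, hh⟩ ≠ u q} with hJu
  have hpJu : p ∈ Ju := ⟨hq, hd0⟩
  -- the key perturbation estimates, for every shift t
  have key : ∀ t : ℝ,
      A * ((jumpCount M N u (a s) : ℝ)
          - (jumpCount M N (fun q => u q + if q ∈ T then t else 0) (a s) : ℝ))
        ≤ (T.card : ℝ) * t ^ 2 + 2 * t * B := by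
    intro t
    set w : Pix M N → ℝ := fun q => u q + if q ∈ T then t else 0 with hw
    have hv := hmin (Function.update ustar s w)
    rw [← Finset.add_sum_erase _ _ (mem_univ s), ← Finset.add_sum_erase _ _ (mem_univ s)] at hv
    have herase : ∑ s' ∈ univ.erase s, ((∑ p, (Function.update ustar s w s' p - h s' p) ^ 2) +
        (γ * ω s' / L ^ 2) * (jumpCount M N (Function.update ustar s w s') (a s') : ℝ)) =
        ∑ s' ∈ univ.erase s, ((∑ p, (ustar s' p - h s' p) ^ 2) +
        (γ * ω s' / L ^ 2) * (jumpCount M N (ustar s') (a s') : ℝ)) := by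
      refine Finset.sum_congr rfl fun s' hs' => ?_
      rw [Function.update_of_ne (Finset.ne_of_mem_erase hs')]
    rw [herase, Function.update_self] at hv
    have hv' : (∑ q, (u q - h s q) ^ 2) + A * (jumpCount M N u (a s) : ℝ) ≤
        (∑ q, (w q - h s q) ^ 2) + A * (jumpCount M N w (a s) : ℝ) := by
      exact le_of_add_le_add_right hv
    have hsum : ∑ q, (w q - h s q) ^ 2 =
        (∑ q, (u q - h s q) ^ 2) + ((T.card : ℝ) * t ^ 2 + 2 * t * B) := by
      have hpt : ∀ q : Pix M N, (w q - h s q) ^ 2 =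
          (u q - h s q) ^ 2 + (if q ∈ T then t ^ 2 + 2 * t * (u q - h s q) else 0) := by
        intro q
        by_cases hqT : q ∈ T <;> simp [hw, hqT] <;> ring
      rw [Finset.sum_congr rfl fun q _ => hpt q, Finset.sum_add_distrib,
        Finset.sum_ite_mem, Finset.univ_inter, Finset.sum_add_distrib,
        Finset.sum_const, nsmul_eq_mul, hB, Finset.mul_sum]
    rw [hsum] at hv'
    linarith
  -- jump count never increases, decreases at t = -d
  have hle : ∀ t : ℝ,
      jumpCount M N (fun q => u q + if q ∈ T then t else 0) (a s) ≤ jumpCount M N u (a s) := by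
    intro t
    apply Set.ncard_le_ncard _ (Set.toFinite _)
    rintro q ⟨hqa, hne⟩
    by_cases hqp : q = p
    · subst hqp; exact ⟨hqa, hd0⟩
    · refine ⟨hqa, fun hcon => hne ?_⟩
      show (u _ + if (⟨(q : ℤ × ℤ) + a s, hqa⟩ : Pix M N) ∈ T then t else 0)
          = u q + if q ∈ T then t else 0
      rw [hcon]
      by_cases hqT : q ∈ T
      · rw [if_pos hqT, if_pos ((hTiff q hqa hqp).mpr hqT)]
      · rw [if_neg hqT, if_neg (fun hc => hqT ((hTiff q hqa hqp).mp hc))]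
  have hlt : jumpCount M N (fun q => u q + if q ∈ T then (-d) else 0) (a s) + 1 ≤
      jumpCount M N u (a s) := by
    set w : Pix M N → ℝ := fun q => u q + if q ∈ T then (-d) else 0 with hw
    set Jw : Set (Pix M N) := {q : Pix M N |
      ∃ hh : (q : ℤ × ℤ) + a s ∈ gridDomain M N, w ⟨(q : ℤ × ℤ) + a s, hh⟩ ≠ w q} with hJw
    have hpJw : p ∉ Jw := by
      rintro ⟨hh, hne⟩
      apply hne
      show (u _ + if (⟨(p : ℤ × ℤ) + a s, hh⟩ : Pix M N) ∈ T then (-d) else 0)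
          = u p + if p ∈ T then (-d) else 0
      have h1 : (⟨(p : ℤ × ℤ) + a s, hh⟩ : Pix M N) = pa := rfl
      rw [h1, if_pos hpaT, if_neg hpT, hdd]
      ring
    have hsub : insert p Jw ⊆ Ju := by
      rintro q hins
      rcases Set.mem_insert_iff.mp hins with hqp | hqJw
      · subst hqp; exact hpJu
      · rcases hqJw with ⟨hqa, hne⟩
        by_cases hqp : q = p
        · subst hqp; exact hpJu
        · refine ⟨hqa, fun hcon => hne ?_⟩
          show (u _ + if (⟨(q : ℤ × ℤ) + a s, hqa⟩ : Pix M N) ∈ T then (-d) else 0)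
              = u q + if q ∈ T then (-d) else 0
          rw [hcon]
          by_cases hqT : q ∈ T
          · rw [if_pos hqT, if_pos ((hTiff q hqa hqp).mpr hqT)]
          · rw [if_neg hqT, if_neg (fun hc => hqT ((hTiff q hqa hqp).mp hc))]
    calc jumpCount M N w (a s) + 1 = (insert p Jw).ncard := by
          rw [Set.ncard_insert_of_notMem hpJw (Set.toFinite _)]; rfl
      _ ≤ jumpCount M N u (a s) := Set.ncard_le_ncard hsub (Set.toFinite _)
  -- T is nonempty and has at most W elements
  have hTpos : 0 < T.card := Finset.card_pos.mpr ⟨pa, hpaT⟩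
  have hTW : T.card ≤ max M N := by
    set K : Set ℤ := {k : ℤ | (p : ℤ × ℤ) + k • a s ∈ gridDomain M N} with hK
    have hinj : Function.Injective (fun k : ℤ => (p : ℤ × ℤ) + k • a s) := by
      intro k1 k2 hk
      have h2 : (k1 - k2) • (a s) = 0 := by
        rw [sub_smul, sub_eq_zero]
        exact add_left_cancel hk
      rcases smul_eq_zero.mp h2 with h0 | h0
      · omega
      · exact absurd h0 (ha s)
    have hsub : (Subtype.val '' (↑T : Set (Pix M N))) ⊆ (fun k : ℤ => (p : ℤ × ℤ) + k • a s) '' K := by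
      rintro x ⟨q, hqT, rfl⟩
      rcases (hmemT q).mp hqT with ⟨k, hk1, hkeq⟩
      exact ⟨k, by rw [hK]; show (p : ℤ × ℤ) + k • a s ∈ gridDomain M N; rw [← hkeq]; exact q.2, hkeq.symm⟩
    have h1 : T.card = (Subtype.val '' (↑T : Set (Pix M N))).ncard := by
      rw [Set.ncard_image_of_injective _ Subtype.val_injective, Set.ncard_coe_finset]
    have h2 : ((fun k : ℤ => (p : ℤ × ℤ) + k • a s) '' K).ncard = K.ncard :=
      Set.ncard_image_of_injective _ hinj
    have h3 : ((fun k : ℤ => (p : ℤ × ℤ) + k • a s) '' K).Finite := by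
      apply Set.Finite.subset (gridDomain M N).finite_toSet
      rintro x ⟨k, hk, rfl⟩
      exact hk
    calc T.card = (Subtype.val '' (↑T : Set (Pix M N))).ncard := h1
      _ ≤ ((fun k : ℤ => (p : ℤ × ℤ) + k • a s) '' K).ncard := Set.ncard_le_ncard hsub h3
      _ = K.ncard := h2
      _ ≤ max M N := hline s p
  -- B = 0
  have hquad : ∀ t : ℝ, 0 ≤ (T.card : ℝ) * t ^ 2 + 2 * t * B := by
    intro t
    have h1 := key t
    have h2 : (jumpCount M N (fun q => u q + if q ∈ T then t else 0) (a s) : ℝ)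
        ≤ (jumpCount M N u (a s) : ℝ) := Nat.cast_le.mpr (hle t)
    nlinarith
  have hTcpos : (0 : ℝ) < (T.card : ℝ) := by exact_mod_cast hTpos
  have hB0 : B = 0 := quad_nonneg_forces_zero _ _ hTcpos hquad
  -- main estimate: A ≤ |T| * d^2
  have hmain : A ≤ (T.card : ℝ) * d ^ 2 := by
    have h1 := key (-d)
    have h2 : (jumpCount M N (fun q => u q + if q ∈ T then (-d) else 0) (a s) : ℝ) + 1
        ≤ (jumpCount M N u (a s) : ℝ) := by exact_mod_cast hlt
    have h3 : A * 1 ≤ A * ((jumpCount M N u (a s) : ℝ)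
        - (jumpCount M N (fun q => u q + if q ∈ T then (-d) else 0) (a s) : ℝ)) :=
      mul_le_mul_of_nonneg_left (by linarith) (le_of_lt hApos)
    rw [hB0] at h1
    linarith
  -- conclude
  have hWpos : (0 : ℝ) < (max M N : ℝ) := by
    have h1 : 0 < max M N := by omega
    exact_mod_cast h1
  have hTWr : (T.card : ℝ) ≤ (max M N : ℝ) := by exact_mod_cast Nat.cast_le.mpr hTW
  have hfin : γ * (Finset.univ.inf' (Finset.univ_nonempty_iff.mpr ⟨⟨0, by omega⟩⟩) ω) /
      (L ^ 2 * (max M N : ℝ)) ≤ d ^ 2 := by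
    have hinf : (Finset.univ.inf' (Finset.univ_nonempty_iff.mpr ⟨⟨0, by omega⟩⟩) ω) ≤ ω s :=
      Finset.inf'_le _ (mem_univ s)
    have hinfpos : 0 < (Finset.univ.inf' (Finset.univ_nonempty_iff.mpr ⟨⟨0, by omega⟩⟩) ω) := by
      obtain ⟨s0, -, hs0⟩ := Finset.exists_mem_eq_inf' (Finset.univ_nonempty_iff.mpr ⟨⟨0, by omega⟩⟩) ω
      rw [hs0]; exact hω s0
    have hAW : γ * (Finset.univ.inf' (Finset.univ_nonempty_iff.mpr ⟨⟨0, by omega⟩⟩) ω) / L ^ 2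
        ≤ (max M N : ℝ) * d ^ 2 := by
      have : γ * (Finset.univ.inf' (Finset.univ_nonempty_iff.mpr ⟨⟨0, by omega⟩⟩) ω) / L ^ 2 ≤ A := by
        rw [hA]
        apply div_le_div_of_nonneg_right _ (by positivity)
        · exact mul_le_mul_of_nonneg_left hinf (le_of_lt hγ)
      refine le_trans this (le_trans hmain ?_)
      exact mul_le_mul_of_nonneg_right hTWr (sq_nonneg d)
    rw [div_le_iff₀ (by positivity), mul_comm (L ^ 2) ((max M N : ℝ))]
    rw [div_le_iff₀ (by positivity)] at hAW
    nlinarith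
  calc Real.sqrt (γ * (Finset.univ.inf' (Finset.univ_nonempty_iff.mpr ⟨⟨0, by omega⟩⟩) ω) /
        (L ^ 2 * (max M N : ℝ))) ≤ Real.sqrt (d ^ 2) := Real.sqrt_le_sqrt hfin
    _ = |d| := by rw [Real.sqrt_sq_eq_abs]
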